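/- arXiv:2009.03505 — 4 statements merged into one kernel-verified Lean document; each statement's English description precedes it below -/
import Mathlib

section
/- Let P_N and P_A be probability distributions on a finite alphabet X with P_N absolutely continuous with respect to P_A, and for real M > 2 define GD_M(P_N,P_A) = D(P_A || ((M-2)P_N + P_A)/(M-1)) + (M-2)·D(P_N || ((M-2)P_N + P_A)/(M-1)). Then the partial derivative of GD_M(P_N,P_A) with respect to M equals D(P_N || ((M-2)P_N + P_A)/(M-1)). -/
open Finset Real

def IsProb {X : Type*} [Fintype X] (P : X → ℝ) : Prop :=
  (∀ x, 0 ≤ P x) ∧ ∑ x, P x = 1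

noncomputable def KL {X : Type*} [Fintype X] (P Q : X → ℝ) : ℝ :=
  ∑ x, P x * Real.log (P x / Q x)

private lemma term_deriv (a b M : ℝ) (ha : 0 ≤ a) (hb : 0 ≤ b) (hM : 2 < M) :
    HasDerivAt (fun m : ℝ => ((m - 2) * a + b) * Real.log ((m - 2) * a + b))
      (a * (Real.log ((M - 2) * a + b) + 1)) M := by
  rcases eq_or_lt_of_le ha with h0 | hpos
  · subst h0
    simpa using hasDerivAt_const M (b * Real.log b)
  · have hne : (M - 2) * a + b ≠ 0 := by nlinarith
    have hlin : HasDerivAt (fun m : ℝ => (m - 2) * a + b) a M := by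
      simpa using (((hasDerivAt_id M).sub_const 2).mul_const a).add_const b
    have h := (Real.hasDerivAt_mul_log hne).comp M hlin
    simpa [Function.comp_def, mul_comm] using h

private lemma term_eq (a b m : ℝ) (ha : 0 ≤ a) (hb : 0 ≤ b) (hab : b = 0 → a = 0)
    (hm : 2 < m) :
    b * Real.log (b / (((m - 2) * a + b) / (m - 1)))
      + (m - 2) * (a * Real.log (a / (((m - 2) * a + b) / (m - 1))))
    = b * Real.log b + (m - 2) * (a * Real.log a)
      - ((m - 2) * a + b) * Real.log ((m - 2) * a + b)
      + ((m - 2) * a + b) * Real.log (m - 1) := by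
  rcases eq_or_lt_of_le hb with hb0 | hbpos
  · have ha0 : a = 0 := hab hb0.symm
    simp [← hb0, ha0]
  · have hm1 : (0:ℝ) < m - 1 := by linarith
    have hs : 0 < (m - 2) * a + b := by nlinarith
    have hq : ((m - 2) * a + b) / (m - 1) ≠ 0 := (div_pos hs hm1).ne'
    have hlq : Real.log (((m - 2) * a + b) / (m - 1))
        = Real.log ((m - 2) * a + b) - Real.log (m - 1) :=
      Real.log_div hs.ne' hm1.ne'
    rw [Real.log_div hbpos.ne' hq]
    rcases eq_or_lt_of_le ha with ha0 | hapos
    · rw [← ha0] at hlq ⊢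
      rw [hlq]; ring
    · rw [Real.log_div hapos.ne' hq, hlq]; ring

/-- ∂GD_M(P_N,P_A)/∂M = D(P_N ‖ ((M-2)P_N+P_A)/(M-1)) for real M > 2. -/
theorem stmt1 {X : Type*} [Fintype X] (PN PA : X → ℝ)
    (hN : IsProb PN) (hA : IsProb PA)
    (hac : ∀ x, PA x = 0 → PN x = 0)
    (M : ℝ) (hM : 2 < M) :
    HasDerivAt (fun m : ℝ =>
        KL PA (fun x => ((m - 2) * PN x + PA x) / (m - 1))
          + (m - 2) * KL PN (fun x => ((m - 2) * PN x + PA x) / (m - 1)))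
      (KL PN (fun x => ((M - 2) * PN x + PA x) / (M - 1))) M := by
  obtain ⟨hN0, hN1⟩ := hN
  obtain ⟨hA0, hA1⟩ := hA
  set F : ℝ → ℝ := fun m =>
    (∑ x, (PA x * Real.log (PA x) + (m - 2) * (PN x * Real.log (PN x))
      - ((m - 2) * PN x + PA x) * Real.log ((m - 2) * PN x + PA x)))
    + (m - 1) * Real.log (m - 1) with hF
  -- derivative of F
  have hM1 : (0:ℝ) < M - 1 := by linarith
  have hderivF : HasDerivAt F
      ((∑ x, (PN x * Real.log (PN x)
        - PN x * (Real.log ((M - 2) * PN x + PA x) + 1)))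
        + (Real.log (M - 1) + 1)) M := by
    apply HasDerivAt.add
    · apply HasDerivAt.fun_sum
      intro x _
      have h1 : HasDerivAt (fun m : ℝ =>
          PA x * Real.log (PA x) + (m - 2) * (PN x * Real.log (PN x)))
          (PN x * Real.log (PN x)) M := by
        simpa using (hasDerivAt_const M (PA x * Real.log (PA x))).fun_add
          (((hasDerivAt_id M).sub_const 2).mul_const (PN x * Real.log (PN x)))
      exact h1.sub (term_deriv (PN x) (PA x) M (hN0 x) (hA0 x) hM)
    · have hlin2 : HasDerivAt (fun m : ℝ => m - 1) 1 M := (hasDerivAt_id M).sub_const 1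
      have h := (Real.hasDerivAt_mul_log hM1.ne').comp M hlin2
      simpa [Function.comp_def] using h
  -- the derivative value equals KL PN Q
  have hKL : KL PN (fun x => ((M - 2) * PN x + PA x) / (M - 1))
      = ∑ x, (PN x * Real.log (PN x)
        - PN x * Real.log ((M - 2) * PN x + PA x) + PN x * Real.log (M - 1)) := by
    unfold KL
    apply Finset.sum_congr rfl
    intro x _
    rcases eq_or_lt_of_le (hN0 x) with h0 | hpos
    · simp [← h0]
    · have hs : 0 < (M - 2) * PN x + PA x := by nlinarith [hA0 x]
      have hq : ((M - 2) * PN x + PA x) / (M - 1) ≠ 0 := (div_pos hs hM1).ne'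
      rw [Real.log_div hpos.ne' hq, Real.log_div hs.ne' hM1.ne']
      ring
  have e1 : ∑ x, (PN x * Real.log (PN x)
      - PN x * (Real.log ((M - 2) * PN x + PA x) + 1))
      = (∑ x, (PN x * Real.log (PN x) - PN x * Real.log ((M - 2) * PN x + PA x))) - 1 := by
    have h : ∀ x ∈ (Finset.univ : Finset X),
        PN x * Real.log (PN x) - PN x * (Real.log ((M - 2) * PN x + PA x) + 1)
        = (PN x * Real.log (PN x) - PN x * Real.log ((M - 2) * PN x + PA x)) - PN x :=
      fun x _ => by ring
    rw [Finset.sum_congr rfl h, Finset.sum_sub_distrib, hN1]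
  have e2 : ∑ x, (PN x * Real.log (PN x)
      - PN x * Real.log ((M - 2) * PN x + PA x) + PN x * Real.log (M - 1))
      = (∑ x, (PN x * Real.log (PN x) - PN x * Real.log ((M - 2) * PN x + PA x)))
        + Real.log (M - 1) := by
    rw [Finset.sum_add_distrib, ← Finset.sum_mul, hN1, one_mul]
  have hval : (∑ x, (PN x * Real.log (PN x)
        - PN x * (Real.log ((M - 2) * PN x + PA x) + 1)))
        + (Real.log (M - 1) + 1)
      = KL PN (fun x => ((M - 2) * PN x + PA x) / (M - 1)) := by
    rw [hKL, e1, e2]; ring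
  rw [← hval]
  -- eventual equality
  apply hderivF.congr_of_eventuallyEq
  have hmem : Set.Ioi (2:ℝ) ∈ nhds M := Ioi_mem_nhds hM
  filter_upwards [hmem] with m hm
  have hm' : (2:ℝ) < m := hm
  have hm1 : (0:ℝ) < m - 1 := by linarith
  have hsumS : ∑ x, ((m - 2) * PN x + PA x) = m - 1 := by
    rw [Finset.sum_add_distrib, ← Finset.mul_sum, hN1, hA1]; ring
  have hGF : KL PA (fun x => ((m - 2) * PN x + PA x) / (m - 1))
          + (m - 2) * KL PN (fun x => ((m - 2) * PN x + PA x) / (m - 1)) = F m := by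
    unfold KL
    rw [hF]
    rw [Finset.mul_sum, ← Finset.sum_add_distrib]
    have : ∀ x ∈ (Finset.univ : Finset X),
        PA x * Real.log (PA x / (((m - 2) * PN x + PA x) / (m - 1)))
          + (m - 2) * (PN x * Real.log (PN x / (((m - 2) * PN x + PA x) / (m - 1))))
        = (PA x * Real.log (PA x) + (m - 2) * (PN x * Real.log (PN x))
          - ((m - 2) * PN x + PA x) * Real.log ((m - 2) * PN x + PA x))
          + ((m - 2) * PN x + PA x) * Real.log (m - 1) := fun x _ => by
      have h := term_eq (PN x) (PA x) m (hN0 x) (hA0 x) (hac x) hm'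
      linarith [h]
    rw [Finset.sum_congr rfl this, Finset.sum_add_distrib, ← Finset.sum_mul, hsumS]
  exact hGF
end

section
/- Let P_N and P_A be distinct probability distributions on a finite alphabet X with full support. For integer M ≥ 2 define GD_M(P_N,P_A) = D(P_A || ((M-2)P_N + P_A)/(M-1)) + (M-2)·D(P_N || ((M-2)P_N + P_A)/(M-1)). Then GD_M(P_N,P_A) converges to D(P_A || P_N) as M tends to infinity. -/
open Finset Real

open Filter in
lemma auxA : Filter.Tendsto (fun M : ℕ => ((M:ℝ) - 1)) Filter.atTop Filter.atTop := by
  have := Filter.tendsto_atTop_add_const_right Filter.atTop (-1 : ℝ)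
    (tendsto_natCast_atTop_atTop (R := ℝ))
  simpa [sub_eq_add_neg] using this

open Filter in
lemma auxX (a b : ℝ) (ha : 0 < a) (hb : 0 < b) :
    Tendsto (fun M : ℕ => b * Real.log (b / ((((M:ℝ)-2)*a + b)/((M:ℝ)-1)))
      + ((M:ℝ)-2) * (a * Real.log (a / ((((M:ℝ)-2)*a + b)/((M:ℝ)-1)))))
      atTop (nhds (b * Real.log (b/a) + a - b)) := by
  obtain ⟨c, hc⟩ : ∃ c : ℝ, c = b / a - 1 := ⟨_, rfl⟩
  have hcgt : -1 < c := by
    have : 0 < b / a := div_pos hb ha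
    simp [hc]; linarith
  have hB : Tendsto (fun M : ℕ => ((M:ℝ)-1) * Real.log (1 + c/((M:ℝ)-1)))
      atTop (nhds c) := (Real.tendsto_mul_log_one_add_div_atTop c).comp auxA
  have hL : Tendsto (fun M : ℕ => Real.log (1 + c/((M:ℝ)-1))) atTop (nhds 0) := by
    have h1 : Tendsto (fun M : ℕ => c/((M:ℝ)-1)) atTop (nhds 0) := by
      have := auxA.inv_tendsto_atTop.const_mul c
      simpa [div_eq_mul_inv] using this
    have h2 : Tendsto (fun M : ℕ => 1 + c/((M:ℝ)-1)) atTop (nhds 1) := by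
      simpa using (tendsto_const_nhds (x := (1:ℝ))).add h1
    have := ((Real.continuousAt_log (by norm_num : (1:ℝ) ≠ 0)).tendsto).comp h2
    simpa [Function.comp_def] using this
  have hD : Tendsto (fun M : ℕ => ((M:ℝ)-2) * Real.log (1 + c/((M:ℝ)-1)))
      atTop (nhds c) := by
    have hq : Tendsto (fun M : ℕ => ((M:ℝ)-2)/((M:ℝ)-1)) atTop (nhds 1) := by
      have h : Tendsto (fun M : ℕ => 1 - ((M:ℝ)-1)⁻¹) atTop (nhds 1) := by
        simpa using (tendsto_const_nhds (x := (1:ℝ))).sub auxA.inv_tendsto_atTop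
      refine h.congr' ?_
      filter_upwards [eventually_ge_atTop 2] with M hM
      have h1 : ((M:ℝ) - 1) ≠ 0 := by
        have : (2:ℝ) ≤ M := by exact_mod_cast hM
        nlinarith
      field_simp
      ring
    have h := hq.mul hB
    rw [one_mul] at h
    refine h.congr' ?_
    filter_upwards [eventually_ge_atTop 2] with M hM
    have h1 : ((M:ℝ) - 1) ≠ 0 := by
      have : (2:ℝ) ≤ M := by exact_mod_cast hM
      nlinarith
    field_simp
  have key : Tendsto (fun M : ℕ =>
      b * Real.log (b/a) - b * Real.log (1 + c/((M:ℝ)-1))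
        - a * (((M:ℝ)-2) * Real.log (1 + c/((M:ℝ)-1))))
      atTop (nhds (b * Real.log (b/a) + a - b)) := by
    have h := (tendsto_const_nhds (x := b * Real.log (b/a))).sub (hL.const_mul b)
      |>.sub (hD.const_mul a)
    have hv : b * Real.log (b/a) - b * 0 - a * c = b * Real.log (b/a) + a - b := by
      have : a * c = b - a := by
        rw [hc]; field_simp
      rw [this]; ring
    rw [hv] at h
    exact h
  refine key.congr' ?_
  filter_upwards [eventually_ge_atTop 2] with M hM
  have hM2 : (2:ℝ) ≤ M := by exact_mod_cast hM
  have h1 : (0:ℝ) < (M:ℝ) - 1 := by linarith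
  have h1' : ((M:ℝ) - 1) ≠ 0 := ne_of_gt h1
  have hpos : 0 < 1 + c/((M:ℝ)-1) := by
    rcases le_or_gt 0 c with hc0 | hc0
    · have : 0 ≤ c / ((M:ℝ)-1) := div_nonneg hc0 h1.le
      linarith
    · have : c ≤ c / ((M:ℝ)-1) := by
        rw [le_div_iff₀ h1]; nlinarith
      linarith
  have hQ : (((M:ℝ)-2)*a + b)/((M:ℝ)-1) = a * (1 + c/((M:ℝ)-1)) := by
    rw [hc]; field_simp; ring
  have haQ : a / ((((M:ℝ)-2)*a + b)/((M:ℝ)-1)) = (1 + c/((M:ℝ)-1))⁻¹ := by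
    rw [hQ]
    rw [div_mul_eq_div_mul_one_div, div_self (ne_of_gt ha), one_mul, one_div]
  have hlogaQ : Real.log (a / ((((M:ℝ)-2)*a + b)/((M:ℝ)-1)))
      = - Real.log (1 + c/((M:ℝ)-1)) := by
    rw [haQ, Real.log_inv]
  have hbQ : b / ((((M:ℝ)-2)*a + b)/((M:ℝ)-1))
      = (b/a) * (a / ((((M:ℝ)-2)*a + b)/((M:ℝ)-1))) := by
    rw [div_mul_div_comm]
    rw [mul_comm b a, mul_div_mul_left _ _ (ne_of_gt ha)]
  have hlogbQ : Real.log (b / ((((M:ℝ)-2)*a + b)/((M:ℝ)-1)))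
      = Real.log (b/a) - Real.log (1 + c/((M:ℝ)-1)) := by
    rw [hbQ, Real.log_mul (by positivity) (by rw [haQ]; positivity), hlogaQ]
    ring
  rw [hlogaQ, hlogbQ]
  ring

/-- GD_M(P_N,P_A) → D(P_A‖P_N) as the integer M → ∞. -/
theorem stmt2 {X : Type*} [Fintype X] (PN PA : X → ℝ)
    (hN : IsProb PN) (hA : IsProb PA) (hne : PN ≠ PA)
    (hNpos : ∀ x, 0 < PN x) (hApos : ∀ x, 0 < PA x) :
    Filter.Tendsto (fun M : ℕ =>
        KL PA (fun x => (((M : ℝ) - 2) * PN x + PA x) / ((M : ℝ) - 1))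
          + ((M : ℝ) - 2) *
              KL PN (fun x => (((M : ℝ) - 2) * PN x + PA x) / ((M : ℝ) - 1)))
      Filter.atTop (nhds (KL PA PN)) := by
  have hfun : (fun M : ℕ =>
        KL PA (fun x => (((M : ℝ) - 2) * PN x + PA x) / ((M : ℝ) - 1))
          + ((M : ℝ) - 2) *
              KL PN (fun x => (((M : ℝ) - 2) * PN x + PA x) / ((M : ℝ) - 1)))
      = fun M : ℕ => ∑ x, (PA x * Real.log (PA x / ((((M:ℝ)-2)*PN x + PA x)/((M:ℝ)-1)))
          + ((M:ℝ)-2) * (PN x * Real.log (PN x / ((((M:ℝ)-2)*PN x + PA x)/((M:ℝ)-1))))) := by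
    funext M
    simp [KL, Finset.mul_sum, Finset.sum_add_distrib]
  have hval : KL PA PN
      = ∑ x, (PA x * Real.log (PA x / PN x) + PN x - PA x) := by
    have : ∑ x, (PA x * Real.log (PA x / PN x) + PN x - PA x)
        = (∑ x, PA x * Real.log (PA x / PN x)) + (∑ x, PN x) - ∑ x, PA x := by
      rw [Finset.sum_sub_distrib, Finset.sum_add_distrib]
    rw [this, hN.2, hA.2, KL]
    ring
  rw [hfun, hval]
  exact tendsto_finset_sum _ (fun x _ => auxX (PN x) (PA x) (hNpos x) (hApos x))
end

section
/- Let X be a finite alphabet, P_N ≠ P_A probability distributions with full support on X, M ≥ 3, and let GD_M = D(P_A || P_mix) + (M-2)·D(P_N || P_mix) with P_mix = ((M-2)P_N + P_A)/(M-1). Define LD_i(λ) as the minimum over pairs (j,k), j ≠ k, and tuples Q with G_j(Q) ≤ λ, G_k(Q) ≤ λ of D(Q_i || P_A) + Σ_{l≠i} D(Q_l || P_N). Then LD_i(λ) = 0 whenever λ ≥ GD_M. -/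
open Finset Real

noncomputable def Gfun {X : Type*} [Fintype X] {M : ℕ} (j : Fin M) (Q : Fin M → X → ℝ) : ℝ :=
  ∑ t ∈ Finset.univ.filter (· ≠ j),
    KL (Q t) (fun x => (∑ l ∈ Finset.univ.filter (· ≠ j), Q l x) / ((M : ℝ) - 1))

noncomputable def LD {X : Type*} [Fintype X] (M : ℕ) (PN PA : X → ℝ) (i : Fin M)
    (lam : ℝ) : ℝ :=
  sInf {v : ℝ | ∃ (j k : Fin M) (Q : Fin M → X → ℝ), j ≠ k ∧ (∀ l, IsProb (Q l)) ∧
      Gfun j Q ≤ lam ∧ Gfun k Q ≤ lam ∧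
      v = KL (Q i) PA + ∑ l ∈ Finset.univ.filter (· ≠ i), KL (Q l) PN}

lemma KL_self {X : Type*} [Fintype X] (P : X → ℝ) (hP : ∀ x, 0 < P x) : KL P P = 0 := by
  unfold KL
  apply Finset.sum_eq_zero
  intro x _
  rw [div_self (hP x).ne', Real.log_one, mul_zero]

lemma KL_nonneg {X : Type*} [Fintype X] (P Q : X → ℝ) (hP : IsProb P) (hQpos : ∀ x, 0 < Q x)
    (hQ1 : ∑ x, Q x = 1) : 0 ≤ KL P Q := by
  have key : ∀ x, P x - Q x ≤ P x * Real.log (P x / Q x) := by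
    intro x
    rcases eq_or_lt_of_le (hP.1 x) with h | h
    · simp [← h]; linarith [(hQpos x).le]
    · have hlog : Real.log (Q x / P x) ≤ Q x / P x - 1 :=
        Real.log_le_sub_one_of_pos (div_pos (hQpos x) h)
      have hinv : Real.log (P x / Q x) = - Real.log (Q x / P x) := by
        rw [← Real.log_inv, inv_div]
      have hm : P x * (Q x / P x) = Q x := by field_simp
      nlinarith [mul_le_mul_of_nonneg_left hlog (hP.1 x)]
  calc (0:ℝ) = ∑ x, (P x - Q x) := by rw [Finset.sum_sub_distrib, hP.2, hQ1]; ring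
    _ ≤ ∑ x, P x * Real.log (P x / Q x) := Finset.sum_le_sum fun x _ => key x
    _ = KL P Q := rfl

/-- LD_i(λ) = 0 whenever λ ≥ GD_M(P_N,P_A). -/
theorem stmt13 {X : Type*} [Fintype X] (M : ℕ) (hM : 3 ≤ M)
    (PN PA : X → ℝ) (hN : IsProb PN) (hA : IsProb PA) (hne : PN ≠ PA)
    (hNpos : ∀ x, 0 < PN x) (hApos : ∀ x, 0 < PA x)
    (i : Fin M) (lam : ℝ)
    (hlam : KL PA (fun x => (((M : ℝ) - 2) * PN x + PA x) / ((M : ℝ) - 1))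
        + ((M : ℝ) - 2) *
            KL PN (fun x => (((M : ℝ) - 2) * PN x + PA x) / ((M : ℝ) - 1)) ≤ lam) :
    LD M PN PA i lam = 0 := by
  have hMcast : ((M - 1 : ℕ) : ℝ) = (M : ℝ) - 1 := by
    have : (1:ℕ) ≤ M := by omega
    push_cast [this]; ring
  set mix : X → ℝ := fun x => (((M : ℝ) - 2) * PN x + PA x) / ((M : ℝ) - 1) with hmixdef
  set Qw : Fin M → X → ℝ := fun l => if l = i then PA else PN with hQwdef
  have hcardf : ∀ j : Fin M, (Finset.univ.filter (· ≠ j) : Finset (Fin M)).card = M - 1 := by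
    intro j
    rw [Finset.filter_ne', Finset.card_erase_of_mem (Finset.mem_univ j)]
    simp
  -- Gfun at the witness tuple for j ≠ i
  have hG : ∀ j : Fin M, j ≠ i → Gfun j Qw = KL PA mix + ((M : ℝ) - 2) * KL PN mix := by
    intro j hji
    have himem : i ∈ (Finset.univ.filter (· ≠ j) : Finset (Fin M)) := by
      simp [Ne.symm hji]
    have hMsum : (fun x => (∑ l ∈ Finset.univ.filter (· ≠ j), Qw l x) / ((M : ℝ) - 1)) = mix := by
      funext x
      have hsum : ∑ l ∈ Finset.univ.filter (· ≠ j), Qw l x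
          = ((M : ℝ) - 1) * PN x + (PA x - PN x) := by
        have h1 : ∀ l, Qw l x = PN x + (if l = i then PA x - PN x else 0) := by
          intro l; by_cases h : l = i <;> simp [Qw, h]
        rw [Finset.sum_congr rfl (fun l _ => h1 l), Finset.sum_add_distrib,
          Finset.sum_const, Finset.sum_ite_eq' _ i (fun _ => PA x - PN x), if_pos himem,
          hcardf j, nsmul_eq_mul, hMcast]
      rw [hsum, hmixdef]
      ring
    unfold Gfun
    rw [hMsum]
    have h2 : ∀ t, KL (Qw t) mix = KL PN mix + (if t = i then KL PA mix - KL PN mix else 0) := by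
      intro t; by_cases h : t = i <;> simp [Qw, h]
    rw [Finset.sum_congr rfl (fun t _ => h2 t), Finset.sum_add_distrib, Finset.sum_const,
      Finset.sum_ite_eq' _ i (fun _ => KL PA mix - KL PN mix), if_pos himem,
      hcardf j, nsmul_eq_mul, hMcast]
    ring
  -- pick two elements j ≠ k, both ≠ i
  have hcard2 : 1 < (Finset.univ.filter (· ≠ i) : Finset (Fin M)).card := by
    rw [hcardf i]; omega
  obtain ⟨j, hj, k, hk, hjk⟩ := Finset.one_lt_card.mp hcard2
  rw [Finset.mem_filter] at hj hk
  -- membership of 0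
  have hmem : (0:ℝ) ∈ {v : ℝ | ∃ (j k : Fin M) (Q : Fin M → X → ℝ), j ≠ k ∧ (∀ l, IsProb (Q l)) ∧
      Gfun j Q ≤ lam ∧ Gfun k Q ≤ lam ∧
      v = KL (Q i) PA + ∑ l ∈ Finset.univ.filter (· ≠ i), KL (Q l) PN} := by
    refine ⟨j, k, Qw, hjk, ?_, ?_, ?_, ?_⟩
    · intro l; by_cases h : l = i <;> simp [Qw, h, hA, hN]
    · rw [hG j hj.2]; exact hlam
    · rw [hG k hk.2]; exact hlam
    · have hQi : Qw i = PA := by simp [Qw]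
      have : ∀ l ∈ (Finset.univ.filter (· ≠ i) : Finset (Fin M)), KL (Qw l) PN = 0 := by
        intro l hl
        rw [Finset.mem_filter] at hl
        simp only [Qw, if_neg hl.2]
        exact KL_self PN hNpos
      rw [hQi, KL_self PA hApos, Finset.sum_eq_zero this, add_zero]
  -- lower bound
  have hlb : ∀ v ∈ {v : ℝ | ∃ (j k : Fin M) (Q : Fin M → X → ℝ), j ≠ k ∧ (∀ l, IsProb (Q l)) ∧
      Gfun j Q ≤ lam ∧ Gfun k Q ≤ lam ∧
      v = KL (Q i) PA + ∑ l ∈ Finset.univ.filter (· ≠ i), KL (Q l) PN}, (0:ℝ) ≤ v := by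
    rintro v ⟨j', k', Q, -, hQ, -, -, rfl⟩
    have h1 : 0 ≤ KL (Q i) PA := KL_nonneg _ _ (hQ i) hApos hA.2
    have h2 : 0 ≤ ∑ l ∈ Finset.univ.filter (· ≠ i), KL (Q l) PN :=
      Finset.sum_nonneg fun l _ => KL_nonneg _ _ (hQ l) hNpos hN.2
    linarith
  unfold LD
  exact le_antisymm (csInf_le ⟨0, hlb⟩ hmem) (le_csInf ⟨0, hmem⟩ hlb)
end

section
/- For the case of T outliers with identical anomalous distribution: let P_N ≠ P_A be full-support distributions on a finite alphabet X, M > 2T, and for t in [T] define f(M,T,t) = t·D(P_A || P_mix^t) + (M-T-t)·D(P_N || P_mix^t), where P_mix^t = (t·P_A + (M-T-t)·P_N)/(M-T). Then, viewing M and T as real parameters, the partial derivative of f(M,T,t) with respect to M equals D(P_N || P_mix^t), and the partial derivative with respect to T equals -D(P_N || P_mix^t); in particular f is strictly increasing in M and strictly decreasing in T. -/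
open Finset Real

/-- The mixture P_mix^t = (t·P_A + (M-T-t)·P_N)/(M-T), with real parameters. -/
noncomputable def pmix {X : Type*} [Fintype X] (PN PA : X → ℝ) (t m T : ℝ) : X → ℝ :=
  fun x => (t * PA x + (m - T - t) * PN x) / (m - T)

/-- f(M,T,t) = t·D(P_A‖P_mix^t) + (M-T-t)·D(P_N‖P_mix^t). -/
noncomputable def fMT {X : Type*} [Fintype X] (PN PA : X → ℝ) (t m T : ℝ) : ℝ :=
  t * KL PA (pmix PN PA t m T) + (m - T - t) * KL PN (pmix PN PA t m T)

section Aux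
variable {X : Type*} [Fintype X]

lemma KL_pos (P Q : X → ℝ) (hP : ∀ x, 0 < P x) (hQ : ∀ x, 0 < Q x)
    (hPs : ∑ x, P x = 1) (hQs : ∑ x, Q x = 1) (hne : P ≠ Q) : 0 < KL P Q := by
  obtain ⟨x₀, hx₀⟩ : ∃ x, P x ≠ Q x := by
    by_contra h; push_neg at h; exact hne (funext h)
  have key : ∑ x, P x * Real.log (Q x / P x) < ∑ x, (Q x - P x) := by
    apply Finset.sum_lt_sum
    · intro i _
      have h1 := Real.log_le_sub_one_of_pos (div_pos (hQ i) (hP i))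
      have h2 : P i * Real.log (Q i / P i) ≤ P i * (Q i / P i - 1) :=
        mul_le_mul_of_nonneg_left h1 (hP i).le
      have h3 : P i * (Q i / P i - 1) = Q i - P i := by field_simp [(hP i).ne']
      linarith
    · refine ⟨x₀, Finset.mem_univ _, ?_⟩
      have hne1 : Q x₀ / P x₀ ≠ 1 := by
        intro h; exact hx₀ ((div_eq_one_iff_eq (hP x₀).ne').mp h).symm
      have h1 := Real.log_lt_sub_one_of_pos (div_pos (hQ x₀) (hP x₀)) hne1
      have h2 : P x₀ * Real.log (Q x₀ / P x₀) < P x₀ * (Q x₀ / P x₀ - 1) :=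
        mul_lt_mul_of_pos_left h1 (hP x₀)
      have h3 : P x₀ * (Q x₀ / P x₀ - 1) = Q x₀ - P x₀ := by field_simp [(hP x₀).ne']
      linarith
  have hrhs : ∑ x, (Q x - P x) = 0 := by rw [Finset.sum_sub_distrib, hPs, hQs]; ring
  have hKL : KL P Q = -∑ x, P x * Real.log (Q x / P x) := by
    rw [KL, ← Finset.sum_neg_distrib]
    refine Finset.sum_congr rfl fun x _ => ?_
    rw [Real.log_div (hP x).ne' (hQ x).ne', Real.log_div (hQ x).ne' (hP x).ne']
    ring
  rw [hKL]; linarith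

lemma term_hasDeriv (a b t s : ℝ) (ha : 0 < a) (hb : 0 < b) (ht : 0 < t) (hs : t < s) :
    HasDerivAt (fun s => t * a * Real.log a + (s - t) * b * Real.log b
        - (t * a + (s - t) * b) * Real.log (t * a + (s - t) * b)
        + (t * a + (s - t) * b) * Real.log s)
      (b * Real.log (b / ((t * a + (s - t) * b) / s)) - b + (t * a + (s - t) * b) / s) s := by
  have hspos : 0 < s := ht.trans hs
  have hupos : 0 < t * a + (s - t) * b :=
    add_pos (mul_pos ht ha) (mul_pos (sub_pos.2 hs) hb)
  have hu : HasDerivAt (fun s : ℝ => t * a + (s - t) * b) b s := by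
    have h := (((hasDerivAt_id s).sub_const t).mul_const b).const_add (t * a)
    simpa using h
  have hlogu : HasDerivAt (fun s => Real.log (t * a + (s - t) * b))
      (b / (t * a + (s - t) * b)) s := hu.log hupos.ne'
  have h3 := hu.mul hlogu
  have h4 := hu.mul (Real.hasDerivAt_log hspos.ne')
  have h2 : HasDerivAt (fun s : ℝ => (s - t) * b * Real.log b) (b * Real.log b) s := by
    have h := (((hasDerivAt_id s).sub_const t).mul_const b).mul_const (Real.log b)
    simpa using h
  have h := ((h2.const_add (t * a * Real.log a)).sub h3).add h4
  refine h.congr_deriv ?_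
  rw [Real.log_div hb.ne' (div_pos hupos hspos).ne', Real.log_div hupos.ne' hspos.ne']
  have hc : (t * a + (s - t) * b) * (b / (t * a + (s - t) * b)) = b := by field_simp
  rw [hc]
  field_simp
  ring

lemma pmix_shift (PN PA : X → ℝ) (t m T : ℝ) :
    pmix PN PA t (m - T) 0 = pmix PN PA t m T := by
  funext x; simp [pmix]

lemma fMT_shift (PN PA : X → ℝ) (t m T : ℝ) :
    fMT PN PA t m T = fMT PN PA t (m - T) 0 := by
  simp [fMT, pmix_shift]

lemma sum_pmix (PN PA : X → ℝ) (hN : IsProb PN) (hA : IsProb PA) (t s : ℝ)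
    (hs0 : s ≠ 0) : ∑ x, pmix PN PA t s 0 x = 1 := by
  simp only [pmix, sub_zero]
  rw [← Finset.sum_div, Finset.sum_add_distrib, ← Finset.mul_sum, ← Finset.mul_sum,
    hA.2, hN.2]
  field_simp
  ring

lemma G_hasDeriv (PN PA : X → ℝ) (hN : IsProb PN) (hA : IsProb PA)
    (hNpos : ∀ x, 0 < PN x) (hApos : ∀ x, 0 < PA x) (t : ℝ) (ht : 0 < t)
    (s : ℝ) (hs : t < s) :
    HasDerivAt (fun s => fMT PN PA t s 0) (KL PN (pmix PN PA t s 0)) s := by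
  have hspos : 0 < s := ht.trans hs
  have hF : HasDerivAt (fun s => ∑ x, (t * PA x * Real.log (PA x)
        + (s - t) * PN x * Real.log (PN x)
        - (t * PA x + (s - t) * PN x) * Real.log (t * PA x + (s - t) * PN x)
        + (t * PA x + (s - t) * PN x) * Real.log s))
      (∑ x, (PN x * Real.log (PN x / ((t * PA x + (s - t) * PN x) / s)) - PN x
        + (t * PA x + (s - t) * PN x) / s)) s :=
    HasDerivAt.fun_sum fun x _ => term_hasDeriv (PA x) (PN x) t s (hApos x) (hNpos x) ht hs
  have heq : (fun s => fMT PN PA t s 0) =ᶠ[nhds s] (fun s => ∑ x, (t * PA x * Real.log (PA x)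
        + (s - t) * PN x * Real.log (PN x)
        - (t * PA x + (s - t) * PN x) * Real.log (t * PA x + (s - t) * PN x)
        + (t * PA x + (s - t) * PN x) * Real.log s)) := by
    filter_upwards [Ioi_mem_nhds hs] with s' hs'
    have hs'pos : 0 < s' := ht.trans hs'
    simp only [fMT, KL, pmix, sub_zero]
    rw [Finset.mul_sum, Finset.mul_sum, ← Finset.sum_add_distrib]
    refine Finset.sum_congr rfl fun x _ => ?_
    have hupos : 0 < t * PA x + (s' - t) * PN x :=
      add_pos (mul_pos ht (hApos x)) (mul_pos (sub_pos.2 hs') (hNpos x))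
    rw [Real.log_div (hApos x).ne' (div_pos hupos hs'pos).ne',
      Real.log_div (hNpos x).ne' (div_pos hupos hs'pos).ne',
      Real.log_div hupos.ne' hs'pos.ne']
    ring
  have hsum1 : ∑ x, ((t * PA x + (s - t) * PN x) / s) = 1 := by
    rw [← Finset.sum_div, Finset.sum_add_distrib, ← Finset.mul_sum, ← Finset.mul_sum,
      hA.2, hN.2]
    field_simp
    ring
  have hval : (∑ x, (PN x * Real.log (PN x / ((t * PA x + (s - t) * PN x) / s)) - PN x
        + (t * PA x + (s - t) * PN x) / s)) = KL PN (pmix PN PA t s 0) := by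
    rw [Finset.sum_add_distrib, Finset.sum_sub_distrib, hN.2, hsum1]
    simp only [KL, pmix, sub_zero]
    ring
  rw [← hval]
  exact hF.congr_of_eventuallyEq heq

lemma KL_pmix_pos (PN PA : X → ℝ) (hN : IsProb PN) (hA : IsProb PA) (hne : PN ≠ PA)
    (hNpos : ∀ x, 0 < PN x) (hApos : ∀ x, 0 < PA x) (t : ℝ) (ht : 0 < t)
    (s : ℝ) (hs : t < s) : 0 < KL PN (pmix PN PA t s 0) := by
  have hspos : 0 < s := ht.trans hs
  have hQpos : ∀ x, 0 < pmix PN PA t s 0 x := by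
    intro x
    have : 0 < t * PA x + (s - t) * PN x :=
      add_pos (mul_pos ht (hApos x)) (mul_pos (sub_pos.2 hs) (hNpos x))
    simp only [pmix, sub_zero]
    positivity
  have hQne : PN ≠ pmix PN PA t s 0 := by
    intro h
    obtain ⟨x, hx⟩ : ∃ x, PN x ≠ PA x := by
      by_contra hc; push_neg at hc; exact hne (funext hc)
    have := congrFun h x
    simp only [pmix, sub_zero] at this
    rw [eq_div_iff hspos.ne'] at this
    apply hx
    have : t * PN x = t * PA x := by ring_nf at this ⊢; linarith
    exact mul_left_cancel₀ ht.ne' this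
  exact KL_pos PN (pmix PN PA t s 0) hNpos hQpos hN.2 (sum_pmix PN PA hN hA t s hspos.ne') hQne

lemma hM_deriv (PN PA : X → ℝ) (hN : IsProb PN) (hA : IsProb PA)
    (hNpos : ∀ x, 0 < PN x) (hApos : ∀ x, 0 < PA x) (t : ℝ) (ht : 0 < t)
    (m T : ℝ) (h : t < m - T) :
    HasDerivAt (fun m : ℝ => fMT PN PA t m T) (KL PN (pmix PN PA t m T)) m := by
  have hG := G_hasDeriv PN PA hN hA hNpos hApos t ht (m - T) h
  have hsub : HasDerivAt (fun m : ℝ => m - T) 1 m := (hasDerivAt_id m).sub_const T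
  have hcomp := hG.comp m hsub
  have hfun : (fun m : ℝ => fMT PN PA t m T) =
      (fun s => fMT PN PA t s 0) ∘ (fun m : ℝ => m - T) := by
    funext m; exact fMT_shift PN PA t m T
  rw [hfun, ← pmix_shift PN PA t m T]
  simpa using hcomp

lemma hT_deriv (PN PA : X → ℝ) (hN : IsProb PN) (hA : IsProb PA)
    (hNpos : ∀ x, 0 < PN x) (hApos : ∀ x, 0 < PA x) (t : ℝ) (ht : 0 < t)
    (m T : ℝ) (h : t < m - T) :
    HasDerivAt (fun T' : ℝ => fMT PN PA t m T') (-(KL PN (pmix PN PA t m T))) T := by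
  have hG := G_hasDeriv PN PA hN hA hNpos hApos t ht (m - T) h
  have hsub : HasDerivAt (fun T' : ℝ => m - T') (-1) T := (hasDerivAt_id T).const_sub m
  have hcomp := hG.comp T hsub
  have hfun : (fun T' : ℝ => fMT PN PA t m T') =
      (fun s => fMT PN PA t s 0) ∘ (fun T' : ℝ => m - T') := by
    funext T'; exact fMT_shift PN PA t m T'
  rw [hfun, ← pmix_shift PN PA t m T]
  have : KL PN (pmix PN PA t (m - T) 0) * (-1) = -(KL PN (pmix PN PA t (m - T) 0)) := by ring
  rw [← this]
  exact hcomp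

end Aux

/-- ∂f/∂M = D(P_N‖P_mix^t), ∂f/∂T = -D(P_N‖P_mix^t); in particular
f is strictly increasing in M and strictly decreasing in T. -/
theorem stmt15 {X : Type*} [Fintype X] (PN PA : X → ℝ)
    (hN : IsProb PN) (hA : IsProb PA) (hne : PN ≠ PA)
    (hNpos : ∀ x, 0 < PN x) (hApos : ∀ x, 0 < PA x)
    (t M T : ℝ) (ht : 1 ≤ t) (htT : t ≤ T) (hdom : T + t < M) :
    HasDerivAt (fun m : ℝ => fMT PN PA t m T) (KL PN (pmix PN PA t M T)) M
    ∧ HasDerivAt (fun T' : ℝ => fMT PN PA t M T') (-(KL PN (pmix PN PA t M T))) T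
    ∧ (∀ M₁ M₂ : ℝ, T + t < M₁ → M₁ < M₂ → fMT PN PA t M₁ T < fMT PN PA t M₂ T)
    ∧ (∀ T₁ T₂ : ℝ, t ≤ T₁ → T₁ < T₂ → T₂ + t < M →
        fMT PN PA t M T₂ < fMT PN PA t M T₁) := by
  have ht0 : 0 < t := lt_of_lt_of_le one_pos ht
  have hMT : t < M - T := by linarith
  refine ⟨hM_deriv PN PA hN hA hNpos hApos t ht0 M T hMT,
    hT_deriv PN PA hN hA hNpos hApos t ht0 M T hMT, ?_, ?_⟩
  · intro M₁ M₂ h1 h2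
    have hmono : StrictMonoOn (fun m : ℝ => fMT PN PA t m T) (Set.Ioi (T + t)) := by
      apply strictMonoOn_of_deriv_pos (convex_Ioi (T + t))
      · intro m hm
        have hm' : t < m - T := by simp only [Set.mem_Ioi] at hm; linarith
        exact (hM_deriv PN PA hN hA hNpos hApos t ht0 m T hm').differentiableAt.continuousAt.continuousWithinAt
      · intro m hm
        rw [interior_Ioi] at hm
        have hm' : t < m - T := by simp only [Set.mem_Ioi] at hm; linarith
        rw [(hM_deriv PN PA hN hA hNpos hApos t ht0 m T hm').deriv]
        rw [← pmix_shift PN PA t m T]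
        exact KL_pmix_pos PN PA hN hA hne hNpos hApos t ht0 (m - T) hm'
    exact hmono (Set.mem_Ioi.2 h1) (Set.mem_Ioi.2 (h1.trans h2)) h2
  · intro T₁ T₂ h1 h2 h3
    have hanti : StrictAntiOn (fun T' : ℝ => fMT PN PA t M T') (Set.Iio (M - t)) := by
      apply strictAntiOn_of_deriv_neg (convex_Iio (M - t))
      · intro T' hT'
        have hT'' : t < M - T' := by simp only [Set.mem_Iio] at hT'; linarith
        exact (hT_deriv PN PA hN hA hNpos hApos t ht0 M T' hT'').differentiableAt.continuousAt.continuousWithinAt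
      · intro T' hT'
        rw [interior_Iio] at hT'
        have hT'' : t < M - T' := by simp only [Set.mem_Iio] at hT'; linarith
        rw [(hT_deriv PN PA hN hA hNpos hApos t ht0 M T' hT'').deriv]
        rw [← pmix_shift PN PA t M T']
        simp only [neg_neg, Left.neg_neg_iff]
        exact KL_pmix_pos PN PA hN hA hne hNpos hApos t ht0 (M - T') hT''
    have hm1 : T₁ ∈ Set.Iio (M - t) := Set.mem_Iio.2 (by linarith)
    have hm2 : T₂ ∈ Set.Iio (M - t) := Set.mem_Iio.2 (by linarith)
    exact hanti hm1 hm2 h2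
end
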